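/- Let G=(V,E) be a finite simple graph and let H=(V_H,E_H) be the graph with vertex set V_H = V ∪ V', where V' = {v' : v ∈ V} is a disjoint copy of V, and edge set E_H = E ∪ {vv' : v ∈ V}. Then for every natural number k, H has a minimal vertex cover containing at least k vertices of V' if and only if G has an independent set of size k; consequently, the maximum of |S ∩ V'| over all minimal vertex covers S of H equals the independence number α(G) of G. -/

import Mathlib

/-- `S` is a vertex cover of `G`: every edge has an endpoint in `S`. -/
def IsVertexCover {V : Type*} (G : SimpleGraph V) (S : Set V) : Prop :=
  ∀ ⦃u v : V⦄, G.Adj u v → u ∈ S ∨ v ∈ S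

/-- `S` is a minimal vertex cover of `G`: no proper subset is a vertex cover. -/
def IsMinimalVertexCover {V : Type*} (G : SimpleGraph V) (S : Set V) : Prop :=
  IsVertexCover G S ∧ ∀ T : Set V, T ⊂ S → ¬ IsVertexCover G T

/-- `S` is an independent set of `G`: pairwise non-adjacent vertices. -/
def IsIndepSet {V : Type*} (G : SimpleGraph V) (S : Set V) : Prop :=
  ∀ ⦃u v : V⦄, u ∈ S → v ∈ S → ¬ G.Adj u v

/-- `S` is a maximal independent set of `G`: no proper superset is independent. -/
def IsMaximalIndepSet {V : Type*} (G : SimpleGraph V) (S : Set V) : Prop :=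
  IsIndepSet G S ∧ ∀ T : Set V, S ⊂ T → ¬ IsIndepSet G T

/-- `(G, U)` is a yes-instance of Ext VC: some minimal vertex cover contains `U`. -/
def ExtVC {V : Type*} (G : SimpleGraph V) (U : Set V) : Prop :=
  ∃ S : Set V, U ⊆ S ∧ IsMinimalVertexCover G S

/-- `(G, U)` is a yes-instance of Ext IS: some maximal independent set is contained in `U`. -/
def ExtIS {V : Type*} (G : SimpleGraph V) (U : Set V) : Prop :=
  ∃ S : Set V, S ⊆ U ∧ IsMaximalIndepSet G S

/-- The closed neighborhood `N_G[U]` of a set `U` of vertices. -/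
def closedNbhd {V : Type*} (G : SimpleGraph V) (U : Set V) : Set V :=
  U ∪ {v | ∃ u ∈ U, G.Adj u v}

/-- `S` is a dominating set of `G`: every vertex is in `S` or adjacent to a vertex of `S`. -/
def IsDominating {V : Type*} (G : SimpleGraph V) (S : Set V) : Prop :=
  ∀ v : V, v ∈ S ∨ ∃ u ∈ S, G.Adj u v

/-- The graph `H` built from `G`: its vertex set consists of two copies of `V`
(`Sum.inl` is the original copy `V`, `Sum.inr` is the copy `V' = {v' : v ∈ V}`), and its
edges are the edges of `G` on the first copy together with the perfect matching `v v'`. -/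
def doubledGraph {V : Type*} (G : SimpleGraph V) : SimpleGraph (V ⊕ V) :=
  SimpleGraph.fromRel (fun x y =>
    match x, y with
    | .inl u, .inl v => G.Adj u v
    | .inl u, .inr v => u = v
    | _, _ => False)

section Aux
open Sum

lemma dg_adj {V : Type*} (G : SimpleGraph V) (x y : V ⊕ V) :
    (doubledGraph G).Adj x y ↔
      (∃ u v, x = inl u ∧ y = inl v ∧ G.Adj u v) ∨
      (∃ u, x = inl u ∧ y = inr u) ∨ (∃ u, x = inr u ∧ y = inl u) := by
  cases x with
  | inl u => cases y with
    | inl v =>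
      simp only [doubledGraph, SimpleGraph.fromRel_adj]
      constructor
      · rintro ⟨h, h' | h'⟩
        · exact Or.inl ⟨u, v, rfl, rfl, h'⟩
        · exact Or.inl ⟨u, v, rfl, rfl, h'.symm⟩
      · rintro (⟨a, b, ha, hb, h⟩ | ⟨a, ha, hb⟩ | ⟨a, ha, hb⟩) <;> simp_all
        exact fun e => G.loopless.irrefl b (e ▸ h)
    | inr v =>
      simp only [doubledGraph, SimpleGraph.fromRel_adj]
      constructor
      · rintro ⟨h, h' | h'⟩
        · exact Or.inr (Or.inl ⟨u, by simp [h']⟩)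
        · exact absurd h' id
      · rintro (⟨a, b, ha, hb, h⟩ | ⟨a, ha, hb⟩ | ⟨a, ha, hb⟩) <;> simp_all
  | inr u => cases y with
    | inl v =>
      simp only [doubledGraph, SimpleGraph.fromRel_adj]
      constructor
      · rintro ⟨h, h' | h'⟩
        · exact absurd h' id
        · exact Or.inr (Or.inr ⟨u, rfl, by simp [h']⟩)
      · rintro (⟨a, b, ha, hb, h⟩ | ⟨a, ha, hb⟩ | ⟨a, ha, hb⟩) <;> simp_all
    | inr v =>
      simp only [doubledGraph, SimpleGraph.fromRel_adj]
      constructor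
      · rintro ⟨h, h' | h'⟩ <;> exact absurd h' id
      · rintro (⟨a, b, ha, hb, h⟩ | ⟨a, ha, hb⟩ | ⟨a, ha, hb⟩) <;> simp_all

lemma cover_indep {V : Type*} (G : SimpleGraph V) {S : Set (V ⊕ V)}
    (h : IsMinimalVertexCover (doubledGraph G) S) :
    IsIndepSet G (Sum.inr ⁻¹' S) := by
  obtain ⟨hc, hmin⟩ := h
  have key : ∀ u : V, inr u ∈ S → (inl u : V ⊕ V) ∉ S := by
    intro u hr hl
    refine hmin (S \ {inr u}) ⟨Set.diff_subset, fun hsub => ?_⟩ ?_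
    · exact (hsub hr).2 rfl
    · intro x y hxy
      rcases (dg_adj G x y).1 hxy with ⟨a, b, rfl, rfl, hab⟩ | ⟨a, rfl, rfl⟩ | ⟨a, rfl, rfl⟩
      · rcases hc hxy with hx | hy
        · exact Or.inl ⟨hx, by simp⟩
        · exact Or.inr ⟨hy, by simp⟩
      · by_cases hau : a = u
        · subst hau; exact Or.inl ⟨hl, by simp⟩
        · rcases hc hxy with hx | hy
          · exact Or.inl ⟨hx, by simp⟩
          · exact Or.inr ⟨hy, by simp [hau]⟩
      · by_cases hau : a = u
        · subst hau; exact Or.inr ⟨hl, by simp⟩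
        · rcases hc hxy with hx | hy
          · exact Or.inl ⟨hx, by simp [hau]⟩
          · exact Or.inr ⟨hy, by simp⟩
  intro u v hu hv hadj
  have hedge : (doubledGraph G).Adj (inl u) (inl v) :=
    (dg_adj G _ _).2 (Or.inl ⟨u, v, rfl, rfl, hadj⟩)
  rcases hc hedge with h1 | h2
  · exact key u hu h1
  · exact key v hv h2

def coverOf {V : Type*} (I : Set V) : Set (V ⊕ V) := Sum.inr '' I ∪ Sum.inl '' Iᶜ

lemma coverOf_minimal {V : Type*} (G : SimpleGraph V) {I : Set V} (hI : IsIndepSet G I) :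
    IsMinimalVertexCover (doubledGraph G) (coverOf I) := by
  constructor
  · intro x y hxy
    rcases (dg_adj G x y).1 hxy with ⟨a, b, rfl, rfl, hab⟩ | ⟨a, rfl, rfl⟩ | ⟨a, rfl, rfl⟩
    · by_cases ha : a ∈ I
      · by_cases hb : b ∈ I
        · exact absurd hab (hI ha hb)
        · exact Or.inr (Or.inr ⟨b, hb, rfl⟩)
      · exact Or.inl (Or.inr ⟨a, ha, rfl⟩)
    · by_cases ha : a ∈ I
      · exact Or.inr (Or.inl ⟨a, ha, rfl⟩)
      · exact Or.inl (Or.inr ⟨a, ha, rfl⟩)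
    · by_cases ha : a ∈ I
      · exact Or.inl (Or.inl ⟨a, ha, rfl⟩)
      · exact Or.inr (Or.inr ⟨a, ha, rfl⟩)
  · rintro T ⟨hTsub, hne⟩ hTcov
    obtain ⟨x, hxS, hxT⟩ : ∃ x, x ∈ coverOf I ∧ x ∉ T := by
      by_contra hcon
      push_neg at hcon
      exact hne (fun x hx => hcon x hx)
    have hedge : ∀ a : V, (doubledGraph G).Adj (inl a) (inr a) :=
      fun a => (dg_adj G _ _).2 (Or.inr (Or.inl ⟨a, rfl, rfl⟩))
    rcases hxS with ⟨a, ha, rfl⟩ | ⟨a, ha, rfl⟩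
    · -- x = inr a, a ∈ I; inl a ∉ coverOf I
      rcases hTcov (hedge a) with h1 | h2
      · rcases hTsub h1 with ⟨b, hb, hbe⟩ | ⟨b, hb, hbe⟩ <;> simp_all
      · exact hxT h2
    · -- x = inl a, a ∉ I
      rcases hTcov (hedge a) with h1 | h2
      · exact hxT h1
      · rcases hTsub h2 with ⟨b, hb, hbe⟩ | ⟨b, hb, hbe⟩ <;> simp_all

lemma coverOf_inter {V : Type*} (I : Set V) :
    coverOf I ∩ Set.range (Sum.inr : V → V ⊕ V) = Sum.inr '' I := by
  ext x
  constructor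
  · rintro ⟨hx, ⟨a, rfl⟩⟩
    rcases hx with ⟨b, hb, hbe⟩ | ⟨b, hb, hbe⟩ <;> simp_all
  · rintro ⟨a, ha, rfl⟩
    exact ⟨Or.inl ⟨a, ha, rfl⟩, ⟨a, rfl⟩⟩

end Aux

/-- For every `k`, the graph `H = doubledGraph G` has a minimal vertex cover
containing at least `k` vertices of the copy `V'` iff `G` has an independent set of size `k`;
consequently, the maximum of `|S ∩ V'|` over all minimal vertex covers `S` of `H` equals the
independence number `α(G)`. -/
theorem statement_11 {V : Type*} [Fintype V] (G : SimpleGraph V) :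
    (∀ k : ℕ,
      (∃ S : Set (V ⊕ V), IsMinimalVertexCover (doubledGraph G) S ∧
          k ≤ (S ∩ Set.range Sum.inr).ncard) ↔
        ∃ I : Set V, IsIndepSet G I ∧ I.ncard = k) ∧
    sSup {n : ℕ | ∃ S : Set (V ⊕ V), IsMinimalVertexCover (doubledGraph G) S ∧
          n = (S ∩ Set.range Sum.inr).ncard}
      = sSup {n : ℕ | ∃ I : Set V, IsIndepSet G I ∧ n = I.ncard} := by
  have hr : Function.Injective (Sum.inr : V → V ⊕ V) := Sum.inr_injective
  have cardfact : ∀ S : Set (V ⊕ V), (S ∩ Set.range Sum.inr).ncard = (Sum.inr ⁻¹' S).ncard := by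
    intro S
    rw [← Set.image_preimage_eq_inter_range, Set.ncard_image_of_injective _ hr]
  constructor
  · intro k
    constructor
    · rintro ⟨S, hS, hk⟩
      have hind := cover_indep G hS
      rw [cardfact] at hk
      obtain ⟨J, hJsub, hJcard⟩ := Set.exists_subset_card_eq hk
      exact ⟨J, fun u v hu hv => hind (hJsub hu) (hJsub hv), hJcard⟩
    · rintro ⟨I, hI, hcard⟩
      refine ⟨coverOf I, coverOf_minimal G hI, ?_⟩
      rw [coverOf_inter, Set.ncard_image_of_injective _ hr, hcard]
  · congr 1
    ext n
    simp only [Set.mem_setOf_eq]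
    constructor
    · rintro ⟨S, hS, rfl⟩
      exact ⟨Sum.inr ⁻¹' S, cover_indep G hS, cardfact S⟩
    · rintro ⟨I, hI, rfl⟩
      exact ⟨coverOf I, coverOf_minimal G hI, by
        rw [coverOf_inter, Set.ncard_image_of_injective _ hr]⟩
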